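/- arXiv:math/0603524 — 3 statements merged into one kernel-verified Lean document; each statement's English description precedes it below -/
import Mathlib

section
/- Define B♯ := B + ℏ⁻¹·{ b ∈ B : π(b) ∈ I } as a ℂ[ℏ]-submodule of B[ℏ⁻¹]. Then: (i) B♯ is a Lie subalgebra of B[ℏ⁻¹] with respect to the commutator bracket; (ii) there is a short exact sequence of ℂ-vector spaces 0 → B₀/I → B♯/ℏB♯ → I → 0, where B₀/I is the quotient of B₀ by the ℂ-subspace I, the first map is induced by the inclusion B ⊆ B♯, and the second map sends the class of ℏ⁻¹·b (with π(b) ∈ I) to π(b). -/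
open Pointwise

/-- the subspace `B♯ := B + ℏ⁻¹·{b ∈ B : π b ∈ I}` of `B[ℏ⁻¹]`.
Here `C` plays the role of `B[ℏ⁻¹]` (with `v = ℏ⁻¹` a central inverse of `ι ℏ`,
and `C` generated by `ι(B)` and `v`), `A ⊆ Z(B₀)` is a `ℂ`-subalgebra closed
under the Poisson bracket, and `I ⊆ A` is an ideal with `{A, I} ⊆ I`.
(i) `S = B♯` is a Lie subalgebra of `C` for the commutator bracket;
(ii) the short exact sequence `0 → B₀/I → B♯/ℏB♯ → I → 0`, stated elementwise:
the assignment `ι b + v·ι b' ↦ π b'` is well defined, the map `B₀/I → B♯/ℏB♯`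
induced by the inclusion `B ⊆ B♯` is injective, the sequence is exact in the
middle, and the second map is surjective onto `I`. -/
theorem stmt_4 (B : Type*) [Ring B] [Algebra ℂ B] [Algebra (Polynomial ℂ) B]
    [IsScalarTower ℂ (Polynomial ℂ) B]
    (htf : ∀ (q : Polynomial ℂ) (b : B), q • b = 0 → q = 0 ∨ b = 0)
    (hbar : B) (hhbar : hbar = algebraMap (Polynomial ℂ) B Polynomial.X)
    (B₀ : Type*) [Ring B₀] [Algebra ℂ B₀] (π : B →+* B₀)
    (hπℂ : ∀ a : ℂ, π (algebraMap ℂ B a) = algebraMap ℂ B₀ a)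
    (hsurj : Function.Surjective π)
    (hker : ∀ b : B, π b = 0 ↔ ∃ a : B, b = hbar * a)
    (A I : Set B₀)
    (hAcenter : A ⊆ Subring.center B₀)
    (h1A : (1 : B₀) ∈ A)
    (hAadd : ∀ x ∈ A, ∀ y ∈ A, x + y ∈ A)
    (hAmul : ∀ x ∈ A, ∀ y ∈ A, x * y ∈ A)
    (hAsmul : ∀ (a : ℂ), ∀ x ∈ A, a • x ∈ A)
    (hAA : ∀ a₁ a₂ c : B, π a₁ ∈ A → π a₂ ∈ A →
      a₁ * a₂ - a₂ * a₁ = hbar * c → π c ∈ A)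
    (hIA : I ⊆ A)
    (h0I : (0 : B₀) ∈ I)
    (hIadd : ∀ x ∈ I, ∀ y ∈ I, x + y ∈ I)
    (hIneg : ∀ x ∈ I, -x ∈ I)
    (hImul : ∀ a ∈ A, ∀ x ∈ I, a * x ∈ I)
    (hAI : ∀ a i c : B, π a ∈ A → π i ∈ I →
      a * i - i * a = hbar * c → π c ∈ I)
    (C : Type*) [Ring C] [Algebra ℂ C] (ι : B →+* C)
    (hιℂ : ∀ a : ℂ, ι (algebraMap ℂ B a) = algebraMap ℂ C a)
    (hιinj : Function.Injective ι)
    (v : C) (hv₁ : ι hbar * v = 1) (hv₂ : v * ι hbar = 1)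
    (hvcentral : ∀ c : C, v * c = c * v)
    (hCgen : ∀ c : C, ∃ (b : B) (k : ℕ), c = v ^ k * ι b)
    (S : Set C)
    (hS : S = {x : C | ∃ b b' : B, π b' ∈ I ∧ x = ι b + v * ι b'}) :
    -- (i) `B♯` is a Lie subalgebra of `B[ℏ⁻¹]` under the commutator
    (((0 : C) ∈ S) ∧ (∀ x ∈ S, ∀ y ∈ S, x + y ∈ S) ∧ (∀ x ∈ S, -x ∈ S) ∧
      (∀ (a : ℂ), ∀ x ∈ S, a • x ∈ S) ∧
      (∀ x ∈ S, ∀ y ∈ S, x * y - y * x ∈ S)) ∧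
    -- (ii) the short exact sequence `0 → B₀/I → B♯/ℏB♯ → I → 0`
    ((∀ b₁ b₁' b₂ b₂' : B, π b₁' ∈ I → π b₂' ∈ I →
        ι b₁ + v * ι b₁' = ι b₂ + v * ι b₂' → π b₁' = π b₂') ∧
      (∀ b : B, (∃ s ∈ S, ι b = ι hbar * s) ↔ π b ∈ I) ∧
      (∀ b b' : B, π b' ∈ I →
        (π b' = 0 ↔ ∃ (a : B) (s : C), s ∈ S ∧
          ι b + v * ι b' = ι a + ι hbar * s)) ∧
      (∀ i ∈ I, ∃ b' : B, π b' ∈ I ∧ π b' = i)) := by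
  subst hS
  have hπhbar : π hbar = 0 := (hker hbar).mpr ⟨1, (mul_one _).symm⟩
  have hvh : ∀ c : C, ι hbar * (v * c) = c := fun c => by
    rw [← mul_assoc, hv₁, one_mul]
  have hvh' : ∀ b : B, v * ι (hbar * b) = ι b := fun b => by
    rw [map_mul, ← mul_assoc, hv₂, one_mul]
  have hcomm : ∀ b₁ b₂ : B, π b₂ ∈ Subring.center B₀ →
      ∃ c : B, b₁ * b₂ - b₂ * b₁ = hbar * c := by
    intro b₁ b₂ h
    refine (hker _).mp ?_
    rw [map_sub, map_mul, map_mul, (Subring.mem_center_iff.mp h) (π b₁), sub_self]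
  have key2 : ∀ b₁ b₁' b₂ b₂' : B, ι b₁ + v * ι b₁' = ι b₂ + v * ι b₂' →
      π b₁' = π b₂' := by
    intro b₁ b₁' b₂ b₂' h
    have h1 := congrArg (fun c => ι hbar * c) h
    simp only [mul_add, hvh, ← map_mul, ← map_add] at h1
    have h2 := congrArg π (hιinj h1)
    simpa [map_add, map_mul, hπhbar] using h2
  have t2 : ∀ x y : C, x * (v * y) = v * (x * y) := fun x y => by
    rw [← mul_assoc, ← hvcentral, mul_assoc]
  have t3 : ∀ x y : C, (v * x) * (v * y) = v * (v * (x * y)) := fun x y => by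
    rw [mul_assoc, t2]
  have prod : ∀ x x' y y' : B, (ι x + v * ι x') * (ι y + v * ι y') =
      ι (x * y) + v * ι (x * y') + (v * ι (x' * y) + v * (v * ι (x' * y'))) := by
    intro x x' y y'
    rw [add_mul, mul_add, mul_add, t2 (ι x) (ι y'), mul_assoc v (ι x') (ι y),
      t3 (ι x') (ι y')]
    simp only [← map_mul]
  refine ⟨⟨?_, ?_, ?_, ?_, ?_⟩, ?_, ?_, ?_, ?_⟩
  · exact ⟨0, 0, by simpa using h0I, by simp⟩
  · rintro x ⟨b₁, b₁', h1, rfl⟩ y ⟨b₂, b₂', h2, rfl⟩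
    refine ⟨b₁ + b₂, b₁' + b₂', ?_, ?_⟩
    · rw [map_add]; exact hIadd _ h1 _ h2
    · rw [map_add, map_add, mul_add]; abel
  · rintro x ⟨b, b', h, rfl⟩
    refine ⟨-b, -b', ?_, ?_⟩
    · rw [map_neg]; exact hIneg _ h
    · rw [map_neg, map_neg, mul_neg]; abel
  · rintro a x ⟨b, b', h, rfl⟩
    refine ⟨algebraMap ℂ B a * b, algebraMap ℂ B a * b', ?_, ?_⟩
    · rw [map_mul, hπℂ]
      have hA : algebraMap ℂ B₀ a ∈ A := by
        simpa [Algebra.algebraMap_eq_smul_one] using hAsmul a 1 h1A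
      exact hImul _ hA _ h
    · rw [map_mul, map_mul, hιℂ, Algebra.smul_def, mul_add]
      congr 1
      rw [← mul_assoc, Algebra.commutes, mul_assoc]
  · rintro x ⟨b₁, b₁', h1, rfl⟩ y ⟨b₂, b₂', h2, rfl⟩
    obtain ⟨c₁, hc₁⟩ := hcomm b₁ b₂' (hAcenter (hIA h2))
    have hcen1 : π (b₁' * b₂ - b₂ * b₁') = 0 := by
      rw [map_sub, map_mul, map_mul,
        Subring.mem_center_iff.mp (hAcenter (hIA h1)) (π b₂)]
      exact sub_self _
    obtain ⟨c₂, hc₂⟩ := (hker _).mp hcen1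
    obtain ⟨c₃, hc₃⟩ := hcomm b₁' b₂' (hAcenter (hIA h2))
    refine ⟨b₁ * b₂ - b₂ * b₁ + c₁ + c₂, c₃, hAI b₁' b₂' c₃ (hIA h1) h2 hc₃, ?_⟩
    have r1 : ι c₁ = v * (ι (b₁ * b₂') - ι (b₂' * b₁)) := by
      rw [← map_sub, hc₁, hvh']
    have r2 : ι c₂ = v * (ι (b₁' * b₂) - ι (b₂ * b₁')) := by
      rw [← map_sub, hc₂, hvh']
    have r3 : ι c₃ = v * (ι (b₁' * b₂') - ι (b₂' * b₁')) := by
      rw [← map_sub, hc₃, hvh']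
    rw [prod b₁ b₁' b₂ b₂', prod b₂ b₂' b₁ b₁', map_add, map_add, map_sub,
      map_mul, map_mul, r1, r2, r3]
    simp only [mul_sub, ← map_mul]
    abel
  · intro b₁ b₁' b₂ b₂' _ _ h
    exact key2 _ _ _ _ h
  · intro b
    constructor
    · rintro ⟨s, ⟨c, c', hc', rfl⟩, heq⟩
      rw [mul_add, hvh, ← map_mul, ← map_add] at heq
      have := congrArg π (hιinj heq)
      rw [map_add, map_mul, hπhbar, zero_mul, zero_add] at this
      rwa [this]
    · intro hb
      exact ⟨v * ι b, ⟨0, b, hb, by simp⟩, (hvh _).symm⟩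
  · intro b b' hb'
    constructor
    · intro h
      obtain ⟨c, hc⟩ := (hker b').mp h
      refine ⟨b + c, 0, ⟨0, 0, by simpa using h0I, by simp⟩, ?_⟩
      rw [hc, hvh', map_add, mul_zero, add_zero]
    · rintro ⟨a, s, ⟨c, c', hc', rfl⟩, heq⟩
      have : ι b + v * ι b' = ι (a + hbar * c + c') + v * ι 0 := by
        rw [heq, mul_add, hvh, ← map_mul, map_add, map_add, map_zero, mul_zero,
          add_zero, add_assoc]
      simpa using key2 _ _ _ _ this
  · intro i hi
    obtain ⟨b', hb'⟩ := hsurj i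
    exact ⟨b', hb' ▸ hi, hb'⟩
end

section
/- M♯ is a B-submodule of M[ℏ⁻¹] containing M, the action of ℏ on M♯ is injective, and there is a short exact sequence of B₀-modules 0 → M₀/I·M₀ → M♯/ℏM♯ → I·M₀ → 0, in which the first map is induced by the inclusion M ⊆ M♯ and the second map sends the class of ℏ⁻¹·m (with m̄ ∈ I·M₀) to m̄. (Here I·M₀ is a B₀-submodule of M₀ because I lies in the center of B₀.) -/
/-- the modification `M♯ := M + ℏ⁻¹·{m ∈ M : m̄ ∈ I·M₀}` inside
`M[ℏ⁻¹]`.  Here `C` plays the role of `B[ℏ⁻¹]` (with `v = ℏ⁻¹`), `M'` that of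
`M[ℏ⁻¹]`, and `S ⊆ M'` is the image of `M♯`.  Then: `I·M₀` is a `B₀`-submodule
of `M₀`; `S` is a `B`-submodule of `M'` containing `M`; `ℏ` acts injectively on
`S`; and there is a short exact sequence of `B₀`-modules
`0 → M₀/I·M₀ → M♯/ℏM♯ → I·M₀ → 0`, stated elementwise: the assignment
`ιM m + v·ιM m₁ ↦ p m₁` is well defined, the first map (induced by `M ⊆ M♯`) is
injective, the sequence is exact in the middle, and the second map is
surjective onto `I·M₀`. -/
theorem stmt_5 (B : Type*) [Ring B] [Algebra (Polynomial ℂ) B]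
    (htf : ∀ (q : Polynomial ℂ) (b : B), q • b = 0 → q = 0 ∨ b = 0)
    (hbar : B) (hhbar : hbar = algebraMap (Polynomial ℂ) B Polynomial.X)
    (B₀ : Type*) [Ring B₀] [Algebra ℂ B₀] (π : B →+* B₀)
    (hsurj : Function.Surjective π)
    (hker : ∀ b : B, π b = 0 ↔ ∃ a : B, b = hbar * a)
    (A I : Set B₀)
    (hAcenter : A ⊆ Subring.center B₀) (h1A : (1 : B₀) ∈ A)
    (hAadd : ∀ x ∈ A, ∀ y ∈ A, x + y ∈ A) (hAmul : ∀ x ∈ A, ∀ y ∈ A, x * y ∈ A)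
    (hAsmul : ∀ (a : ℂ), ∀ x ∈ A, a • x ∈ A)
    (hIA : I ⊆ A) (h0I : (0 : B₀) ∈ I)
    (hIadd : ∀ x ∈ I, ∀ y ∈ I, x + y ∈ I) (hIneg : ∀ x ∈ I, -x ∈ I)
    (hImul : ∀ a ∈ A, ∀ x ∈ I, a * x ∈ I)
    (C : Type*) [Ring C] (ι : B →+* C) (hιinj : Function.Injective ι)
    (v : C) (hv₁ : ι hbar * v = 1) (hv₂ : v * ι hbar = 1)
    (hvcentral : ∀ c : C, v * c = c * v)
    (hCgen : ∀ c : C, ∃ (b : B) (k : ℕ), c = v ^ k * ι b)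
    (M : Type*) [AddCommGroup M] [Module B M]
    (htfM : ∀ m : M, hbar • m = 0 → m = 0)
    (M₀ : Type*) [AddCommGroup M₀] [Module B₀ M₀]
    (p : M →+ M₀) (hpsurj : Function.Surjective p)
    (hpact : ∀ (b : B) (m : M), p (b • m) = π b • p m)
    (hpker : ∀ m : M, p m = 0 ↔ ∃ m' : M, m = hbar • m')
    (M' : Type*) [AddCommGroup M'] [Module C M']
    (ιM : M →+ M') (hιMinj : Function.Injective ιM)
    (hιMact : ∀ (b : B) (m : M), ιM (b • m) = ι b • ιM m)
    (hMgen : ∀ x : M', ∃ (m : M) (k : ℕ), x = v ^ k • ιM m)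
    (IM0 : AddSubgroup M₀)
    (hIM0 : IM0 = AddSubgroup.closure {x : M₀ | ∃ i ∈ I, ∃ m₀ : M₀, x = i • m₀})
    (S : Set M')
    (hS : S = {x : M' | ∃ m m₁ : M, p m₁ ∈ IM0 ∧ x = ιM m + v • ιM m₁}) :
    -- `I·M₀` is a `B₀`-submodule of `M₀` (since `I` is central)
    ((∀ b₀ : B₀, ∀ z ∈ IM0, b₀ • z ∈ IM0) ∧
     -- `M♯` is a `B`-submodule of `M[ℏ⁻¹]` containing `M`
     (∀ m : M, ιM m ∈ S) ∧
     (∀ x ∈ S, ∀ y ∈ S, x + y ∈ S) ∧ (∀ x ∈ S, -x ∈ S) ∧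
     (∀ b : B, ∀ x ∈ S, ι b • x ∈ S)) ∧
    -- `ℏ` acts injectively on `M♯`
    (∀ x ∈ S, ι hbar • x = 0 → x = 0) ∧
    -- the short exact sequence `0 → M₀/I·M₀ → M♯/ℏM♯ → I·M₀ → 0`
    ((∀ m₁ m₁' m₂ m₂' : M, p m₁' ∈ IM0 → p m₂' ∈ IM0 →
        ιM m₁ + v • ιM m₁' = ιM m₂ + v • ιM m₂' → p m₁' = p m₂') ∧
     (∀ m : M, (∃ s ∈ S, ιM m = ι hbar • s) ↔ p m ∈ IM0) ∧
     (∀ m m₁ : M, p m₁ ∈ IM0 →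
        (p m₁ = 0 ↔ ∃ (a : M) (s : M'), s ∈ S ∧
          ιM m + v • ιM m₁ = ιM a + ι hbar • s)) ∧
     (∀ z ∈ IM0, ∃ m₁ : M, p m₁ ∈ IM0 ∧ p m₁ = z)) := by

  subst hS
  -- basic facts
  have hπh : π hbar = 0 := (hker hbar).2 ⟨1, (mul_one hbar).symm⟩
  have hhv : ∀ y : M', ι hbar • (v • y) = y := fun y => by
    rw [smul_smul, hv₁, one_smul]
  have hvh : ∀ y : M', v • (ι hbar • y) = y := fun y => by
    rw [smul_smul, hv₂, one_smul]
  -- I·M₀ is closed under the B₀-action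
  have hsmulIM : ∀ b₀ : B₀, ∀ z ∈ IM0, b₀ • z ∈ IM0 := by
    intro b₀ z hz
    have hle : AddSubgroup.closure {x : M₀ | ∃ i ∈ I, ∃ m₀ : M₀, x = i • m₀} ≤
        IM0.comap (DistribMulAction.toAddMonoidHom M₀ b₀) := by
      rw [AddSubgroup.closure_le]
      rintro x ⟨i, hi, m₀, rfl⟩
      have hcomm : b₀ * i = i * b₀ :=
        (Subring.mem_center_iff.mp (hAcenter (hIA hi)) b₀)
      have : b₀ • i • m₀ = i • (b₀ • m₀) := by
        rw [smul_smul, hcomm, ← smul_smul]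
      show b₀ • (i • m₀) ∈ IM0
      rw [this, hIM0]
      exact AddSubgroup.subset_closure ⟨i, hi, b₀ • m₀, rfl⟩
    have := hle (by rw [← hIM0]; exact hz)
    exact this
  -- ℏ acts injectively on all of M'
  have hpow : ∀ k : ℕ, (ι hbar) ^ k * v ^ k = 1 := by
    intro k
    induction k with
    | zero => simp
    | succ n ih =>
      rw [pow_succ, pow_succ', mul_assoc, ← mul_assoc (ι hbar) v (v ^ n), hv₁,
        one_mul, ih]
  have hcommv : ∀ c : C, Commute v c := fun c => hvcentral c
  have hbarinj : ∀ x : M', ι hbar • x = 0 → x = 0 := by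
    intro x hx
    obtain ⟨m, k, rfl⟩ := hMgen x
    have h1 : (v ^ k : C) • ιM (hbar • m) = 0 := by
      rw [hιMact, smul_smul, ((hcommv (ι hbar)).pow_left k).eq, ← smul_smul]
      exact hx
    have h2 : ιM (hbar • m) = 0 := by
      have := congrArg (fun y => ((ι hbar) ^ k : C) • y) h1
      simpa [smul_smul, hpow k] using this
    have : hbar • m = 0 := hιMinj (by simpa using h2)
    rw [htfM m this, map_zero, smul_zero]
  -- membership of M in S
  have hmemS : ∀ m : M, ιM m ∈
      {x : M' | ∃ m m₁ : M, p m₁ ∈ IM0 ∧ x = ιM m + v • ιM m₁} :=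
    fun m => ⟨m, 0, by simpa using IM0.zero_mem, by simp⟩
  refine ⟨⟨hsmulIM, hmemS, ?_, ?_, ?_⟩, ?_, ?_, ?_, ?_, ?_⟩
  · -- closed under addition
    rintro x ⟨m, m₁, hm₁, rfl⟩ y ⟨n, n₁, hn₁, rfl⟩
    refine ⟨m + n, m₁ + n₁, by rw [map_add]; exact IM0.add_mem hm₁ hn₁, ?_⟩
    simp [map_add, smul_add]
    abel
  · -- closed under negation
    rintro x ⟨m, m₁, hm₁, rfl⟩
    refine ⟨-m, -m₁, by rw [map_neg]; exact IM0.neg_mem hm₁, ?_⟩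
    simp only [map_neg, smul_neg]
    abel
  · -- closed under the B-action
    rintro b x ⟨m, m₁, hm₁, rfl⟩
    refine ⟨b • m, b • m₁, ?_, ?_⟩
    · rw [hpact]; exact hsmulIM _ _ hm₁
    · rw [smul_add, hιMact, hιMact, smul_smul, ← hvcentral (ι b), ← smul_smul]
  · -- ℏ acts injectively on S
    intro x _ hx
    exact hbarinj x hx
  · -- well-definedness of the second map
    intro m₁ m₁' m₂ m₂' _ _ heq
    have h1 : ιM (hbar • m₁ + m₁') = ιM (hbar • m₂ + m₂') := by
      have := congrArg (fun y => (ι hbar : C) • y) heq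
      simpa [smul_add, hhv, hιMact] using this
    have h2 : hbar • m₁ + m₁' = hbar • m₂ + m₂' := hιMinj h1
    have h3 := congrArg p h2
    simpa [map_add, hpact, hπh] using h3
  · -- exactness: image of ℏ·S in M equals preimage of I·M₀
    intro m
    constructor
    · rintro ⟨s, ⟨b, b₁, hb₁, rfl⟩, hm⟩
      have : ιM m = ιM (hbar • b + b₁) := by
        rw [hm]
        simp [smul_add, hhv, hιMact, map_add]
      have hmeq : m = hbar • b + b₁ := hιMinj this
      have : p m = p b₁ := by
        rw [hmeq]; simp [map_add, hpact, hπh]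
      rw [this]; exact hb₁
    · intro hm
      refine ⟨v • ιM m, ⟨0, m, hm, by simp⟩, (hhv _).symm⟩
  · -- exactness in the middle
    intro m m₁ hm₁
    constructor
    · intro h0
      obtain ⟨m', rfl⟩ := (hpker m₁).1 h0
      refine ⟨m + m', 0, ⟨0, 0, by simpa using IM0.zero_mem, by simp⟩, ?_⟩
      rw [hιMact, hvh]
      simp [map_add]
    · rintro ⟨a, s, ⟨b, b₁, hb₁, rfl⟩, heq⟩
      have hs : (ι hbar : C) • (ιM b + v • ιM b₁) = ιM (hbar • b + b₁) := by
        rw [smul_add, hhv, ← hιMact, ← map_add]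
      have h1 : ιM m + v • ιM m₁ = ιM (a + (hbar • b + b₁)) := by
        rw [heq, hs, ← map_add]
      have h2 : v • ιM m₁ = ιM (a + (hbar • b + b₁) - m) := by
        rw [map_sub, ← h1]; abel
      have h3 : ιM m₁ = ιM (hbar • (a + (hbar • b + b₁) - m)) := by
        rw [hιMact, ← h2, hhv]
      have h4 : m₁ = hbar • (a + (hbar • b + b₁) - m) := hιMinj h3
      exact (hpker m₁).2 ⟨_, h4⟩
  · -- surjectivity onto I·M₀
    intro z hz
    obtain ⟨m₁, rfl⟩ := hpsurj z
    exact ⟨m₁, hz, rfl⟩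
end

section
/- For every B-module N on which ℏ acts injectively and which satisfies I·(N/ℏN) = 0, composition with the inclusion M ↪ M^{ren} induces a bijection Hom_B(M^{ren}, N) ≅ Hom_B(M, N). Consequently, the inclusion of the full subcategory of ℏ-torsion-free B-modules N with I·(N/ℏN) = 0 into the category of ℏ-torsion-free B-modules admits a left adjoint, given on objects by M ↦ M^{ren}. -/
open Pointwise

/-- For a subset `T ⊆ M'` (representing a `B`-submodule `N` of `M[ℏ⁻¹]`), the
subset representing `{n ∈ N : n̄ ∈ I·(N/ℏN)}`, namely the additive group
generated by `Ĩ·T` and `ℏ·T` (where `Ĩ = π⁻¹(I)` and `ℏ = hb`). -/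
def sharpAux {B B₀ C M' : Type*} [Ring B] [Ring B₀] [Ring C]
    [AddCommGroup M'] [Module C M']
    (π : B →+* B₀) (I : Set B₀) (ι : B →+* C) (hb : B) (T : Set M') : Set M' :=
  (AddSubgroup.closure
    ({x : M' | ∃ b : B, π b ∈ I ∧ ∃ t ∈ T, x = ι b • t} ∪ (ι hb) • T) :
    AddSubgroup M')

/-- The basic modification step `T ↦ T♯ = T + ℏ⁻¹·{t ∈ T : t̄ ∈ I·T₀}` inside
`M[ℏ⁻¹]`, at the level of subsets of `M'` (here `v = ℏ⁻¹`, `hb = ℏ`). -/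
def sharpSet {B B₀ C M' : Type*} [Ring B] [Ring B₀] [Ring C]
    [AddCommGroup M'] [Module C M']
    (π : B →+* B₀) (I : Set B₀) (ι : B →+* C) (hb : B) (v : C)
    (T : Set M') : Set M' :=
  (AddSubgroup.closure (T ∪ v • sharpAux π I ι hb T) : AddSubgroup M')

/-- the universal property of `M ↪ M^{ren}`.  For every
`ℏ`-torsion-free `B`-module `N` with `I·(N/ℏN) = 0`, composition with the
inclusion `M ↪ M^{ren}` induces a bijection `Hom_B(M^{ren}, N) ≅ Hom_B(M, N)`:
every `B`-linear `g : M → N` extends to a `B`-linear map on `M^{ren}`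
(surjectivity), and two `B`-linear maps on `M^{ren}` agreeing on `M` agree
(injectivity).  Hence `M ↦ M^{ren}` is left adjoint to the inclusion of the
full subcategory of `ℏ`-torsion-free modules killed by `I` modulo `ℏ`. -/
theorem stmt_8 (B : Type*) [Ring B] [Algebra (Polynomial ℂ) B]
    (htf : ∀ (q : Polynomial ℂ) (b : B), q • b = 0 → q = 0 ∨ b = 0)
    (hbar : B) (hhbar : hbar = algebraMap (Polynomial ℂ) B Polynomial.X)
    (B₀ : Type*) [Ring B₀] [Algebra ℂ B₀] (π : B →+* B₀)
    (hsurj : Function.Surjective π)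
    (hker : ∀ b : B, π b = 0 ↔ ∃ a : B, b = hbar * a)
    (A I : Set B₀)
    (hAcenter : A ⊆ Subring.center B₀) (h1A : (1 : B₀) ∈ A)
    (hAadd : ∀ x ∈ A, ∀ y ∈ A, x + y ∈ A) (hAmul : ∀ x ∈ A, ∀ y ∈ A, x * y ∈ A)
    (hAsmul : ∀ (a : ℂ), ∀ x ∈ A, a • x ∈ A)
    (hIA : I ⊆ A) (h0I : (0 : B₀) ∈ I)
    (hIadd : ∀ x ∈ I, ∀ y ∈ I, x + y ∈ I) (hIneg : ∀ x ∈ I, -x ∈ I)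
    (hImul : ∀ a ∈ A, ∀ x ∈ I, a * x ∈ I)
    (C : Type*) [Ring C] (ι : B →+* C) (hιinj : Function.Injective ι)
    (v : C) (hv₁ : ι hbar * v = 1) (hv₂ : v * ι hbar = 1)
    (hvcentral : ∀ c : C, v * c = c * v)
    (hCgen : ∀ c : C, ∃ (b : B) (k : ℕ), c = v ^ k * ι b)
    (M : Type*) [AddCommGroup M] [Module B M]
    (htfM : ∀ m : M, hbar • m = 0 → m = 0)
    (M₀ : Type*) [AddCommGroup M₀] [Module B₀ M₀]
    (p : M →+ M₀) (hpsurj : Function.Surjective p)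
    (hpact : ∀ (b : B) (m : M), p (b • m) = π b • p m)
    (hpker : ∀ m : M, p m = 0 ↔ ∃ m' : M, m = hbar • m')
    (M' : Type*) [AddCommGroup M'] [Module C M']
    (ιM : M →+ M') (hιMinj : Function.Injective ιM)
    (hιMact : ∀ (b : B) (m : M), ιM (b • m) = ι b • ιM m)
    (hMgen : ∀ x : M', ∃ (m : M) (k : ℕ), x = v ^ k • ιM m)
    (Mren : Set M')
    (hMren : Mren = ⋃ k : ℕ, (sharpSet π I ι hbar v)^[k] (Set.range ιM))
    (N : Type*) [AddCommGroup N] [Module B N]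
    (htfN : ∀ n : N, hbar • n = 0 → n = 0)
    (hIN : ∀ (b : B) (n : N), π b ∈ I → ∃ n' : N, b • n = hbar • n') :
    -- surjectivity: every `B`-linear map `M → N` extends to `M^{ren}`
    (∀ g : M →ₗ[B] N, ∃ f : M' → N,
      (∀ x ∈ Mren, ∀ y ∈ Mren, f (x + y) = f x + f y) ∧
      (∀ b : B, ∀ x ∈ Mren, f (ι b • x) = b • f x) ∧
      (∀ m : M, f (ιM m) = g m)) ∧
    -- injectivity: two `B`-linear maps on `M^{ren}` agreeing on `M` coincide
    (∀ f₁ f₂ : M' → N,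
      (∀ x ∈ Mren, ∀ y ∈ Mren, f₁ (x + y) = f₁ x + f₁ y) →
      (∀ b : B, ∀ x ∈ Mren, f₁ (ι b • x) = b • f₁ x) →
      (∀ x ∈ Mren, ∀ y ∈ Mren, f₂ (x + y) = f₂ x + f₂ y) →
      (∀ b : B, ∀ x ∈ Mren, f₂ (ι b • x) = b • f₂ x) →
      (∀ m : M, f₁ (ιM m) = f₂ (ιM m)) →
      ∀ x ∈ Mren, f₁ x = f₂ x) := by
  
  classical
  -- basic commutation facts
  have hbarC : ∀ b : B, hbar * b = b * hbar := by
    intro b; rw [hhbar]; exact Algebra.commutes _ _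
  have hcommI : ∀ b b' : B, π b' ∈ I → ∃ a : B, b * b' = b' * b + hbar * a := by
    intro b b' hb'
    have hc : π (b * b' - b' * b) = 0 := by
      have hz := Subring.mem_center_iff.mp (hAcenter (hIA hb')) (π b)
      rw [map_sub, map_mul, map_mul, hz, sub_self]
    obtain ⟨a, ha⟩ := (hker _).mp hc
    exact ⟨a, sub_eq_iff_eq_add'.mp ha⟩
  have htfNk : ∀ (k : ℕ) (n : N), hbar ^ k • n = 0 → n = 0 := by
    intro k
    induction k with
    | zero => intro n h; simpa using h
    | succ k ih =>
      intro n h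
      rw [pow_succ, mul_smul] at h
      exact htfN n (ih _ h)
  have hvC : ∀ (c : C) (k : ℕ), v ^ k * c = c * v ^ k := fun c k =>
    ((show Commute v c from hvcentral c).pow_left k).eq
  have hvhk : ∀ k : ℕ, ι hbar ^ k * v ^ k = 1 := by
    intro k
    rw [← (show Commute (ι hbar) v from (hvcentral (ι hbar)).symm).mul_pow, hv₁, one_pow]
  have hvhk' : ∀ k : ℕ, v ^ k * ι hbar ^ k = 1 := by
    intro k
    rw [← (show Commute v (ι hbar) from hvcentral (ι hbar)).mul_pow, hv₂, one_pow]
  have hid1 : ∀ (k : ℕ) (x : M'), (ι hbar) ^ k • (v ^ k • x) = x := by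
    intro k x; rw [← mul_smul, hvhk k, one_smul]
  have hιMpow : ∀ (k : ℕ) (m : M), ιM (hbar ^ k • m) = (ι hbar) ^ k • ιM m := by
    intro k m; rw [hιMact, map_pow]
  have hid2 : ∀ (j d : ℕ) (m : M), v ^ (j + d) • ιM (hbar ^ d • m) = v ^ j • ιM m := by
    intro j d m
    rw [hιMpow, ← mul_smul, pow_add, mul_assoc, hvhk' d, mul_one]
  have hbComm : ∀ (b : B) (k : ℕ), hbar ^ k * b = b * hbar ^ k := fun b k =>
    ((show Commute hbar b from hbarC b).pow_left k).eq
  have hbSmul : ∀ (b : B) (k : ℕ) (n : N), hbar ^ k • b • n = b • hbar ^ k • n := by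
    intro b k n; rw [← mul_smul, hbComm, mul_smul]
  -- the filtration F
  obtain ⟨F, hF0, hFsucc, hMrenU⟩ :
      ∃ F : ℕ → Set M', F 0 = Set.range ιM ∧
        (∀ k, F (k + 1) = sharpSet π I ι hbar v (F k)) ∧ Mren = ⋃ k, F k :=
    ⟨fun k => (sharpSet π I ι hbar v)^[k] (Set.range ιM), rfl,
      fun k => Function.iterate_succ_apply' _ _ _, hMren⟩
  have hFM : ∀ k, ∀ x ∈ F k, x ∈ Mren := by
    intro k x hx
    rw [hMrenU]
    exact Set.mem_iUnion.mpr ⟨k, hx⟩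
  have hmemF : ∀ x ∈ Mren, ∃ k, x ∈ F k := by
    intro x hx
    rw [hMrenU] at hx
    exact Set.mem_iUnion.mp hx
  -- smul-stability of sharpAux
  have hAuxSmul : ∀ T : Set M', (∀ b : B, ∀ x ∈ T, ι b • x ∈ T) →
      ∀ b : B, ∀ y ∈ sharpAux π I ι hbar T, ι b • y ∈ sharpAux π I ι hbar T := by
    intro T hT b y hy
    refine AddSubgroup.closure_induction ?_ ?_ ?_ ?_ hy
    · rintro x (⟨b', hb', t, ht, rfl⟩ | ⟨t, ht, rfl⟩)
      · obtain ⟨a, ha⟩ := hcommI b b' hb'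
        have he : ι b • ι b' • t = ι b' • (ι b • t) + ι hbar • (ι a • t) := by
          rw [← mul_smul, ← mul_smul, ← mul_smul, ← map_mul, ha, map_add, add_smul,
            map_mul, map_mul]
        rw [he]
        exact AddSubgroup.add_mem _
          (AddSubgroup.subset_closure (Or.inl ⟨b', hb', ι b • t, hT b t ht, rfl⟩))
          (AddSubgroup.subset_closure (Or.inr (Set.smul_mem_smul_set (hT a t ht))))
      · have he : ι b • ι hbar • t = ι hbar • (ι b • t) := by
          rw [← mul_smul, ← map_mul, ← hbarC, map_mul, mul_smul]
        rw [he]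
        exact AddSubgroup.subset_closure (Or.inr (Set.smul_mem_smul_set (hT b t ht)))
    · rw [smul_zero]; exact AddSubgroup.zero_mem _
    · intro x y _ _ hx hy; rw [smul_add]; exact AddSubgroup.add_mem _ hx hy
    · intro x _ hx; rw [smul_neg]; exact AddSubgroup.neg_mem _ hx
  -- smul-stability of the filtration
  have hSetSmul : ∀ k, ∀ b : B, ∀ x ∈ F k, ι b • x ∈ F k := by
    intro k
    induction k with
    | zero =>
      intro b x hx
      rw [hF0] at hx ⊢
      obtain ⟨m, rfl⟩ := hx
      exact ⟨b • m, hιMact b m⟩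
    | succ k ih =>
      intro b x hx
      rw [hFsucc] at hx ⊢
      refine AddSubgroup.closure_induction ?_ ?_ ?_ ?_ hx
      · rintro z (hz | ⟨y, hy, rfl⟩)
        · exact AddSubgroup.subset_closure (Or.inl (ih b z hz))
        · have he : ι b • v • y = v • (ι b • y) := by
            rw [← mul_smul, ← hvcentral, mul_smul]
          rw [he]
          exact AddSubgroup.subset_closure
            (Or.inr (Set.smul_mem_smul_set (hAuxSmul (F k) ih b y hy)))
      · rw [smul_zero]; exact AddSubgroup.zero_mem _
      · intro z w _ _ hz hw; rw [smul_add]; exact AddSubgroup.add_mem _ hz hw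
      · intro z _ hz; rw [smul_neg]; exact AddSubgroup.neg_mem _ hz
  have hAuxSub : ∀ k, ∀ y ∈ sharpAux π I ι hbar (F k), y ∈ F (k + 1) := by
    intro k y hy
    rw [hFsucc]
    refine AddSubgroup.closure_induction ?_ ?_ ?_ ?_ hy
    · rintro z (⟨b, hb, t, ht, rfl⟩ | ⟨t, ht, rfl⟩)
      · exact AddSubgroup.subset_closure (Or.inl (hSetSmul k b t ht))
      · exact AddSubgroup.subset_closure (Or.inl (hSetSmul k hbar t ht))
    · exact AddSubgroup.zero_mem _
    · intro z w _ _ hz hw; exact AddSubgroup.add_mem _ hz hw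
    · intro z _ hz; exact AddSubgroup.neg_mem _ hz
  constructor
  · -- surjectivity
    intro g
    obtain ⟨Q, hQ⟩ : ∃ Q : M' → N → Prop, ∀ x n,
        Q x n ↔ ∃ (m : M) (k : ℕ), x = v ^ k • ιM m ∧ hbar ^ k • n = g m :=
      ⟨_, fun _ _ => Iff.rfl⟩
    have hQ0 : Q 0 0 := by
      rw [hQ]
      exact ⟨0, 0, by simp, by simp⟩
    have hQadd : ∀ (x y : M') (n n' : N), Q x n → Q y n' → Q (x + y) (n + n') := by
      intro x y n n' hx hy
      rw [hQ] at hx hy ⊢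
      obtain ⟨m, k, rfl, hk⟩ := hx
      obtain ⟨m', j, rfl, hj⟩ := hy
      refine ⟨hbar ^ j • m + hbar ^ k • m', k + j, ?_, ?_⟩
      · rw [map_add, smul_add, hid2 k j m, add_comm k j, hid2 j k m']
      · have e1 : g (hbar ^ j • m) = hbar ^ (k + j) • n := by
          rw [map_smul, ← hk, ← mul_smul, ← pow_add, add_comm j k]
        have e2 : g (hbar ^ k • m') = hbar ^ (k + j) • n' := by
          rw [map_smul, ← hj, ← mul_smul, ← pow_add]
        rw [map_add, e1, e2, smul_add]
    have hQneg : ∀ (x : M') (n : N), Q x n → Q (-x) (-n) := by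
      intro x n hx
      rw [hQ] at hx ⊢
      obtain ⟨m, k, rfl, hk⟩ := hx
      exact ⟨-m, k, by rw [map_neg, smul_neg], by rw [map_neg, smul_neg, hk]⟩
    have hQsmul : ∀ (b : B) (x : M') (n : N), Q x n → Q (ι b • x) (b • n) := by
      intro b x n hx
      rw [hQ] at hx ⊢
      obtain ⟨m, k, rfl, hk⟩ := hx
      refine ⟨b • m, k, ?_, ?_⟩
      · rw [hιMact b m, ← mul_smul, ← mul_smul, hvC (ι b) k]
      · rw [map_smul, ← hk, hbSmul]
    have hUniq' : ∀ (m m' : M) (j d : ℕ) (n n' : N),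
        v ^ (j + d) • ιM m = v ^ j • ιM m' → hbar ^ (j + d) • n = g m →
        hbar ^ j • n' = g m' → n = n' := by
      intro m m' j d n n' hx hn hn'
      have h2 : (ι hbar) ^ (j + d) • (v ^ (j + d) • ιM m)
          = (ι hbar) ^ (j + d) • (v ^ j • ιM m') := by rw [hx]
      rw [hid1] at h2
      have hm : m = hbar ^ d • m' := by
        apply hιMinj
        rw [h2, hιMpow d m', ← mul_smul, add_comm j d, pow_add, mul_assoc, hvhk j, mul_one]
      have h3 : hbar ^ (j + d) • n = hbar ^ (j + d) • n' := by
        rw [hn, hm, map_smul, ← hn', ← mul_smul, ← pow_add, add_comm d j]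
      have h4 : hbar ^ (j + d) • (n - n') = 0 := by rw [smul_sub, h3, sub_self]
      exact sub_eq_zero.mp (htfNk (j + d) _ h4)
    have hUniq : ∀ (x : M') (n n' : N), Q x n → Q x n' → n = n' := by
      intro x n n' hn hn'
      rw [hQ] at hn hn'
      obtain ⟨m, k, rfl, hk⟩ := hn
      obtain ⟨m', j, hx, hj⟩ := hn'
      rcases le_total j k with h | h
      · obtain ⟨d, rfl⟩ := Nat.exists_eq_add_of_le h
        exact hUniq' m m' j d n n' hx hk hj
      · obtain ⟨d, rfl⟩ := Nat.exists_eq_add_of_le h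
        exact (hUniq' m' m k d n' n hx.symm hj hk).symm
    have hEx : ∀ k, ∀ x ∈ F k, ∃ n, Q x n := by
      intro k
      induction k with
      | zero =>
        intro x hx
        rw [hF0] at hx
        obtain ⟨m, rfl⟩ := hx
        exact ⟨g m, by rw [hQ]; exact ⟨m, 0, by simp, by simp⟩⟩
      | succ k ih =>
        intro x hx
        rw [hFsucc] at hx
        refine AddSubgroup.closure_induction ?_ ?_ ?_ ?_ hx
        · rintro z (hz | ⟨y, hy, rfl⟩)
          · exact ih z hz
          · refine AddSubgroup.closure_induction (p := fun y _ => ∃ n, Q (v • y) n)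
              ?_ ?_ ?_ ?_ hy
            · rintro z (⟨b, hb, t, ht, rfl⟩ | ⟨t, ht, rfl⟩)
              · obtain ⟨n, hn⟩ := ih t ht
                rw [hQ] at hn
                obtain ⟨m, k', rfl, hk'⟩ := hn
                obtain ⟨n', hn'⟩ := hIN b n hb
                refine ⟨n', ?_⟩
                rw [hQ]
                refine ⟨b • m, k' + 1, ?_, ?_⟩
                · rw [hιMact, ← mul_smul, ← mul_smul, ← mul_smul, mul_assoc,
                    ← hvC (ι b) k', ← mul_assoc, ← pow_succ']
                · rw [map_smul, ← hk', pow_succ, mul_smul, ← hn', hbSmul]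
              · obtain ⟨n, hn⟩ := ih t ht
                have he : v • ι hbar • t = t := by rw [← mul_smul, hv₂, one_smul]
                exact ⟨n, by rw [he]; exact hn⟩
            · exact ⟨0, by rw [smul_zero]; exact hQ0⟩
            · rintro y z _ _ ⟨n, hn⟩ ⟨n', hn'⟩
              exact ⟨n + n', by rw [smul_add]; exact hQadd _ _ _ _ hn hn'⟩
            · rintro y _ ⟨n, hn⟩
              exact ⟨-n, by rw [smul_neg]; exact hQneg _ _ hn⟩
        · exact ⟨0, hQ0⟩
        · rintro z w _ _ ⟨n, hn⟩ ⟨n', hn'⟩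
          exact ⟨n + n', hQadd _ _ _ _ hn hn'⟩
        · rintro z _ ⟨n, hn⟩
          exact ⟨-n, hQneg _ _ hn⟩
    obtain ⟨f, hfval⟩ : ∃ f : M' → N, ∀ (x : M') (n : N), Q x n → f x = n := by
      refine ⟨fun x => if h : ∃ n, Q x n then h.choose else 0, ?_⟩
      intro x n hn
      have hex : ∃ n, Q x n := ⟨n, hn⟩
      simp only [dif_pos hex]
      exact hUniq x _ n hex.choose_spec hn
    have hfex : ∀ x ∈ Mren, ∃ n, Q x n := by
      intro x hx
      obtain ⟨k, hk⟩ := hmemF x hx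
      exact hEx k x hk
    refine ⟨f, ?_, ?_, ?_⟩
    · intro x hx y hy
      obtain ⟨n, hn⟩ := hfex x hx
      obtain ⟨n', hn'⟩ := hfex y hy
      rw [hfval x n hn, hfval y n' hn', hfval _ _ (hQadd x y n n' hn hn')]
    · intro b x hx
      obtain ⟨n, hn⟩ := hfex x hx
      rw [hfval x n hn, hfval _ _ (hQsmul b x n hn)]
    · intro m
      refine hfval _ _ ?_
      rw [hQ]
      exact ⟨m, 0, by simp, by simp⟩
  · -- injectivity
    intro f₁ f₂ hadd₁ hsmul₁ hadd₂ hsmul₂ hM x hx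
    have hneg : ∀ f : M' → N, (∀ b : B, ∀ x ∈ Mren, f (ι b • x) = b • f x) →
        ∀ x ∈ Mren, f (-x) = -f x := by
      intro f hs x hx
      have h1 : ι (-1 : B) • x = -x := by rw [map_neg, map_one, neg_smul, one_smul]
      have h2 := hs (-1) x hx
      rw [h1, neg_smul, one_smul] at h2
      exact h2
    have hz : f₁ 0 = f₂ 0 := by
      have h0 := hM 0
      rwa [map_zero] at h0
    have key : ∀ k, ∀ x ∈ F k, f₁ x = f₂ x := by
      intro k
      induction k with
      | zero =>
        intro x hx
        rw [hF0] at hx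
        obtain ⟨m, rfl⟩ := hx
        exact hM m
      | succ k ih =>
        intro x hx
        rw [hFsucc] at hx
        have hmemS : ∀ z : M',
            z ∈ AddSubgroup.closure ((F k) ∪ v • sharpAux π I ι hbar (F k)) → z ∈ Mren := by
          intro z hzc
          refine hFM (k + 1) z ?_
          rw [hFsucc]
          exact hzc
        refine AddSubgroup.closure_induction (p := fun z _ => f₁ z = f₂ z) ?_ hz ?_ ?_ hx
        · rintro z (hzk | ⟨y, hy, rfl⟩)
          · exact ih z hzk
          · have hy12 : f₁ y = f₂ y := by
              refine AddSubgroup.closure_induction (p := fun w _ => f₁ w = f₂ w)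
                ?_ hz ?_ ?_ hy
              · rintro w (⟨b, hb, t, ht, rfl⟩ | ⟨t, ht, rfl⟩)
                · rw [hsmul₁ b t (hFM k t ht), hsmul₂ b t (hFM k t ht), ih t ht]
                · rw [hsmul₁ hbar t (hFM k t ht), hsmul₂ hbar t (hFM k t ht), ih t ht]
              · intro w₁ w₂ hw₁ hw₂ h1 h2
                have m1 : w₁ ∈ Mren := hFM (k + 1) w₁ (hAuxSub k w₁ hw₁)
                have m2 : w₂ ∈ Mren := hFM (k + 1) w₂ (hAuxSub k w₂ hw₂)
                rw [hadd₁ w₁ m1 w₂ m2, hadd₂ w₁ m1 w₂ m2, h1, h2]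
              · intro w hw h1
                have m1 : w ∈ Mren := hFM (k + 1) w (hAuxSub k w hw)
                rw [hneg f₁ hsmul₁ w m1, hneg f₂ hsmul₂ w m1, h1]
            have hvyM : v • y ∈ Mren := by
              refine hFM (k + 1) _ ?_
              rw [hFsucc]
              exact AddSubgroup.subset_closure (Or.inr (Set.smul_mem_smul_set hy))
            have h1 : ι hbar • (v • y) = y := by rw [← mul_smul, hv₁, one_smul]
            have e1 : hbar • f₁ (v • y) = f₁ y := by
              rw [← hsmul₁ hbar (v • y) hvyM, h1]
            have e2 : hbar • f₂ (v • y) = f₂ y := by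
              rw [← hsmul₂ hbar (v • y) hvyM, h1]
            have h4 : hbar • (f₁ (v • y) - f₂ (v • y)) = 0 := by
              rw [smul_sub, e1, e2, hy12, sub_self]
            exact sub_eq_zero.mp (htfN _ h4)
        · intro z w hzc hwc h1 h2
          have m1 := hmemS z hzc
          have m2 := hmemS w hwc
          rw [hadd₁ z m1 w m2, hadd₂ z m1 w m2, h1, h2]
        · intro z hzc h1
          have m1 := hmemS z hzc
          rw [hneg f₁ hsmul₁ z m1, hneg f₂ hsmul₂ z m1, h1]
    obtain ⟨k, hk⟩ := hmemF x hx
    exact key k x hk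
end
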